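/- A T0 topological space X is a continuous space if and only if the supremum map ⋁ : (I_T(X), Ω(I_T(X))) → X has a continuous lower adjoint, i.e., there exists a continuous map f : X → (I_T(X), Ω(I_T(X))) such that for all x ∈ X and all A ∈ I_T(X): f(x) ⊆ A if and only if x ⊑ sup A. -/

import Mathlib

open Set

section Defs

variable {X : Type*} [TopologicalSpace X]

/-- Specialization order: `x ⊑ y` iff `x ∈ closure {y}`. -/
def SOrd (x y : X) : Prop := x ∈ closure ({y} : Set X)

/-- `D` is a directed subset (w.r.t. the specialization order). -/
def IsDirSub (D : Set X) : Prop :=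
  D.Nonempty ∧ ∀ a ∈ D, ∀ b ∈ D, ∃ c ∈ D, SOrd a c ∧ SOrd b c

/-- `D` converges to `x`: every open neighbourhood of `x` meets `D`. -/
def ConvTo (D : Set X) (x : X) : Prop :=
  ∀ U : Set X, IsOpen U → x ∈ U → (D ∩ U).Nonempty

/-- `U` is directed-open. -/
def DirOpen (U : Set X) : Prop :=
  ∀ (D : Set X) (x : X), IsDirSub D → ConvTo D x → x ∈ U → (D ∩ U).Nonempty

/-- `x ≪ y` : `x` d-approximates `y`. -/
def WayBelow (x y : X) : Prop :=
  ∀ D : Set X, IsDirSub D → ConvTo D y → ∃ d ∈ D, SOrd x d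

/-- `↓x` w.r.t. the specialization order. -/
def dnSet (x : X) : Set X := {z | SOrd z x}

/-- `↑x` w.r.t. the specialization order. -/
def upSet (x : X) : Set X := {z | SOrd x z}

/-- `⇓y = {x | x ≪ y}`. -/
def wbSet (y : X) : Set X := {x | WayBelow x y}

/-- `x` is the least upper bound of `D` w.r.t. the specialization order. -/
def IsSupOf (x : X) (D : Set X) : Prop :=
  (∀ d ∈ D, SOrd d x) ∧ ∀ y : X, (∀ d ∈ D, SOrd d y) → SOrd x y

/-- A topological ideal: a directed lower set having a supremum and converging to it. -/
def IsTopIdeal (A : Set X) : Prop :=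
  IsDirSub A ∧ (∀ a ∈ A, ∀ z : X, SOrd z a → z ∈ A) ∧
    ∃ s : X, IsSupOf s A ∧ ConvTo A s

end Defs

/-- The set of d-compact elements of `X`. -/
def KSet (X : Type*) [TopologicalSpace X] : Set X := {x | WayBelow x x}

/-- A directed space: a T0 space in which every directed-open set is open. -/
def IsDirectedSpace (X : Type*) [TopologicalSpace X] : Prop :=
  T0Space X ∧ ∀ U : Set X, DirOpen U → IsOpen U

/-- An algebraic space. -/
def IsAlgebraicSpace (X : Type*) [TopologicalSpace X] : Prop :=
  IsDirectedSpace X ∧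
    ∀ x : X, IsDirSub (dnSet x ∩ KSet X) ∧ ConvTo (dnSet x ∩ KSet X) x

/-- A continuous space. -/
def IsContinuousSpace (X : Type*) [TopologicalSpace X] : Prop :=
  IsDirectedSpace X ∧ ∀ x : X, ∃ D ⊆ wbSet x, IsDirSub D ∧ ConvTo D x

/-- A b-space. -/
def IsBSpace (X : Type*) [TopologicalSpace X] : Prop :=
  ∀ U : Set X, IsOpen U → ∀ x ∈ U,
    ∃ y : X, x ∈ interior (upSet y) ∧ interior (upSet y) = upSet y ∧ upSet y ⊆ U

/-- `B` is a basis of the directed space `X`. -/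
def IsBasisOf (X : Type*) [TopologicalSpace X] (B : Set X) : Prop :=
  ∀ x : X, IsDirSub (wbSet x ∩ B) ∧ ConvTo (wbSet x ∩ B) x

/-- The set of topological ideals of `X`. -/
def TopIdeal (X : Type*) [TopologicalSpace X] : Type _ := {A : Set X // IsTopIdeal A}

/-- Membership in the topology `Ω(I_T(X))`. -/
def OmegaOpen {X : Type*} [TopologicalSpace X] (𝒰 : Set (TopIdeal X)) : Prop :=
  ∀ A : TopIdeal X, A ∈ 𝒰 ↔
    ∃ B : TopIdeal X, (∃ x : X, B.1 = dnSet x) ∧ B ∈ 𝒰 ∧ B.1 ⊆ A.1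

theorem sOrd_refl {X : Type*} [TopologicalSpace X] (x : X) : SOrd x x :=
  subset_closure rfl

theorem sOrd_trans {X : Type*} [TopologicalSpace X] {x y z : X}
    (h1 : SOrd x y) (h2 : SOrd y z) : SOrd x z :=
  (closure_minimal (Set.singleton_subset_iff.mpr h2) isClosed_closure) h1

theorem principal_isTopIdeal {X : Type*} [TopologicalSpace X] (x : X) :
    IsTopIdeal (dnSet x) := by
  refine ⟨⟨⟨x, sOrd_refl x⟩, ?_⟩, ?_, x, ⟨?_, ?_⟩, ?_⟩
  · intro a ha b hb
    exact ⟨x, sOrd_refl x, ha, hb⟩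
  · intro a ha z hz
    exact sOrd_trans hz ha
  · intro d hd; exact hd
  · intro y hy; exact hy x (sOrd_refl x)
  · intro U _ hxU
    exact ⟨x, sOrd_refl x, hxU⟩

/-- The topology `Ω(I_T(X))` on the set of topological ideals. -/
def OmegaTop (X : Type*) [TopologicalSpace X] : TopologicalSpace (TopIdeal X) where
  IsOpen := OmegaOpen
  isOpen_univ := by
    intro A
    constructor
    · intro _
      obtain ⟨⟨a, ha⟩, -⟩ := A.2.1
      refine ⟨⟨dnSet a, principal_isTopIdeal a⟩, ⟨a, rfl⟩, trivial, ?_⟩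
      intro z hz
      exact A.2.2.1 a ha z hz
    · intro _
      trivial
  isOpen_inter := by
    intro 𝒰 𝒱 h𝒰 h𝒱 A
    constructor
    · rintro ⟨hAU, hAV⟩
      obtain ⟨B1, ⟨x, hx⟩, hB1U, hB1A⟩ := (h𝒰 A).mp hAU
      obtain ⟨B2, ⟨y, hy⟩, hB2V, hB2A⟩ := (h𝒱 A).mp hAV
      have hxA : x ∈ A.1 := hB1A (by rw [hx]; exact sOrd_refl x)
      have hyA : y ∈ A.1 := hB2A (by rw [hy]; exact sOrd_refl y)
      obtain ⟨c, hcA, hxc, hyc⟩ := A.2.1.2 x hxA y hyA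
      have hsubU : B1.1 ⊆ dnSet c := by
        rw [hx]; intro z hz; exact sOrd_trans hz hxc
      have hsubV : B2.1 ⊆ dnSet c := by
        rw [hy]; intro z hz; exact sOrd_trans hz hyc
      have hcU : (⟨dnSet c, principal_isTopIdeal c⟩ : TopIdeal X) ∈ 𝒰 :=
        (h𝒰 _).mpr ⟨B1, ⟨x, hx⟩, hB1U, hsubU⟩
      have hcV : (⟨dnSet c, principal_isTopIdeal c⟩ : TopIdeal X) ∈ 𝒱 :=
        (h𝒱 _).mpr ⟨B2, ⟨y, hy⟩, hB2V, hsubV⟩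
      exact ⟨⟨dnSet c, principal_isTopIdeal c⟩, ⟨c, rfl⟩, ⟨hcU, hcV⟩,
        fun z hz => A.2.2.1 c hcA z hz⟩
    · rintro ⟨B, hBp, ⟨hBU, hBV⟩, hBA⟩
      exact ⟨(h𝒰 A).mpr ⟨B, hBp, hBU, hBA⟩, (h𝒱 A).mpr ⟨B, hBp, hBV, hBA⟩⟩
  isOpen_sUnion := by
    intro S hS A
    constructor
    · rintro ⟨𝒰, h𝒰S, hA𝒰⟩
      obtain ⟨B, hBp, hB𝒰, hBA⟩ := (hS 𝒰 h𝒰S A).mp hA𝒰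
      exact ⟨B, hBp, ⟨𝒰, h𝒰S, hB𝒰⟩, hBA⟩
    · rintro ⟨B, hBp, ⟨𝒰, h𝒰S, hB𝒰⟩, hBA⟩
      exact ⟨𝒰, h𝒰S, (hS 𝒰 h𝒰S A).mpr ⟨B, hBp, hB𝒰, hBA⟩⟩

instance (X : Type*) [TopologicalSpace X] : TopologicalSpace (TopIdeal X) :=
  OmegaTop X

section Aux

variable {X : Type*} [TopologicalSpace X]

theorem sOrd_iff_forall {x y : X} : SOrd x y ↔ ∀ U : Set X, IsOpen U → x ∈ U → y ∈ U := by
  constructor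
  · intro h U hU hx
    obtain ⟨z, hz, rfl⟩ := mem_closure_iff.mp h U hU hx
    exact hz
  · intro h
    rw [SOrd, mem_closure_iff]
    intro U hU hx
    exact ⟨y, h U hU hx, rfl⟩

theorem sOrd_antisymm [T0Space X] {x y : X} (h1 : SOrd x y) (h2 : SOrd y x) : x = y := by
  apply Inseparable.eq
  rw [inseparable_iff_forall_isOpen]
  intro U hU
  exact ⟨fun h => sOrd_iff_forall.mp h1 U hU h, fun h => sOrd_iff_forall.mp h2 U hU h⟩

theorem convTo_mono {D E : Set X} {x : X} (hDE : D ⊆ E) (h : ConvTo D x) : ConvTo E x := by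
  intro U hU hx
  obtain ⟨d, hd, hdU⟩ := h U hU hx
  exact ⟨d, hDE hd, hdU⟩

theorem convTo_of_sOrd {D : Set X} {x s : X} (h : ConvTo D s) (hxs : SOrd x s) :
    ConvTo D x := fun U hU hx => h U hU (sOrd_iff_forall.mp hxs U hU hx)

theorem singleton_dirSub' (x : X) : IsDirSub ({x} : Set X) := by
  refine ⟨⟨x, rfl⟩, ?_⟩
  intro a ha b hb
  refine ⟨x, rfl, ?_, ?_⟩
  · rw [ha]; exact sOrd_refl x
  · rw [hb]; exact sOrd_refl x

theorem wayBelow_sOrd {x y : X} (h : WayBelow x y) : SOrd x y := by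
  obtain ⟨d, hd, hxd⟩ := h {y} (singleton_dirSub' y) (fun U _ hy => ⟨y, rfl, hy⟩)
  rw [hd] at hxd
  exact hxd

theorem wayBelow_of_sOrd_left {z x y : X} (hzx : SOrd z x) (h : WayBelow x y) :
    WayBelow z y := by
  intro D hD hconv
  obtain ⟨d, hd, hxd⟩ := h D hD hconv
  exact ⟨d, hd, sOrd_trans hzx hxd⟩

theorem wayBelow_of_sOrd_right {x y y' : X} (h : WayBelow x y) (hyy' : SOrd y y') :
    WayBelow x y' := fun D hD hconv => h D hD (convTo_of_sOrd hconv hyy')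

theorem singleton_dirSub (x : X) : IsDirSub ({x} : Set X) := singleton_dirSub' x

theorem dirOpen_upper {U : Set X} (hU : DirOpen U) {a x : X} (ha : a ∈ U)
    (hax : SOrd a x) : x ∈ U := by
  obtain ⟨d, hd, hdU⟩ := hU {x} a (singleton_dirSub x)
    (fun V hV haV => ⟨x, rfl, sOrd_iff_forall.mp hax V hV haV⟩) ha
  rw [hd] at hdU
  exact hdU

/-- In a continuous space, `⇓x` is a topological ideal. -/
theorem wbSet_topIdeal [T0Space X] (h : IsContinuousSpace X) (x : X) :
    IsTopIdeal (wbSet x) := by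
  obtain ⟨D, hDsub, hDdir, hDconv⟩ := h.2 x
  refine ⟨⟨?_, ?_⟩, ?_, x, ⟨?_, ?_⟩, ?_⟩
  · obtain ⟨d, hd⟩ := hDdir.1
    exact ⟨d, hDsub hd⟩
  · intro a ha b hb
    obtain ⟨d1, hd1, had1⟩ := ha D hDdir hDconv
    obtain ⟨d2, hd2, hbd2⟩ := hb D hDdir hDconv
    obtain ⟨c, hc, h1c, h2c⟩ := hDdir.2 d1 hd1 d2 hd2
    exact ⟨c, hDsub hc, sOrd_trans had1 h1c, sOrd_trans hbd2 h2c⟩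
  · intro a ha z hz
    exact wayBelow_of_sOrd_left hz ha
  · intro d hd
    exact wayBelow_sOrd hd
  · intro y hy
    rw [sOrd_iff_forall]
    intro U hU hxU
    obtain ⟨d, hd, hdU⟩ := hDconv U hU hxU
    exact sOrd_iff_forall.mp (hy d (hDsub hd)) U hU hdU
  · exact convTo_mono hDsub hDconv

/-- Interpolation in continuous spaces. -/
theorem interpolation [T0Space X] (h : IsContinuousSpace X) {b x : X}
    (hb : WayBelow b x) : ∃ c, WayBelow b c ∧ WayBelow c x := by
  choose g hgsub hgdir hgconv using h.2
  set E : Set X := ⋃ d ∈ g x, g d with hE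
  have hEdir : IsDirSub E := by
    constructor
    · obtain ⟨d, hd⟩ := (hgdir x).1
      obtain ⟨e, he⟩ := (hgdir d).1
      exact ⟨e, mem_biUnion hd he⟩
    · intro e1 he1 e2 he2
      obtain ⟨d1, hd1, he1'⟩ := mem_iUnion₂.mp he1
      obtain ⟨d2, hd2, he2'⟩ := mem_iUnion₂.mp he2
      obtain ⟨d3, hd3, h13, h23⟩ := (hgdir x).2 d1 hd1 d2 hd2
      have h1 : WayBelow e1 d3 := wayBelow_of_sOrd_right (hgsub d1 he1') h13
      have h2 : WayBelow e2 d3 := wayBelow_of_sOrd_right (hgsub d2 he2') h23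
      obtain ⟨u1, hu1, he1u⟩ := h1 (g d3) (hgdir d3) (hgconv d3)
      obtain ⟨u2, hu2, he2u⟩ := h2 (g d3) (hgdir d3) (hgconv d3)
      obtain ⟨u, hu, hu1u, hu2u⟩ := (hgdir d3).2 u1 hu1 u2 hu2
      exact ⟨u, mem_biUnion hd3 hu, sOrd_trans he1u hu1u, sOrd_trans he2u hu2u⟩
  have hEconv : ConvTo E x := by
    intro U hU hxU
    obtain ⟨d, hd, hdU⟩ := hgconv x U hU hxU
    obtain ⟨e, he, heU⟩ := hgconv d U hU hdU
    exact ⟨e, mem_biUnion hd he, heU⟩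
  obtain ⟨e, he, hbe⟩ := hb E hEdir hEconv
  obtain ⟨d, hd, he'⟩ := mem_iUnion₂.mp he
  exact ⟨d, wayBelow_of_sOrd_left hbe (hgsub d he'), hgsub x hd⟩

theorem sup_dnSet (x : X) : IsSupOf x (dnSet x) :=
  ⟨fun d hd => hd, fun y hy => hy x (sOrd_refl x)⟩

end Aux

/-- a T0 space is a continuous space iff the supremum map
`⋁ : I_T(X) → X` has a continuous lower adjoint. -/
theorem continuous_iff_sup_has_lower_adjoint (X : Type*) [TopologicalSpace X] [T0Space X] :
    IsContinuousSpace X ↔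
      ∃ f : X → TopIdeal X, Continuous f ∧
        ∀ (x : X) (A : TopIdeal X) (s : X), IsSupOf s A.1 →
          ((f x).1 ⊆ A.1 ↔ SOrd x s) := by
  constructor
  · -- forward: continuous space gives the lower adjoint `x ↦ ⇓x`
    intro h
    refine ⟨fun x => ⟨wbSet x, wbSet_topIdeal h x⟩, ?_, ?_⟩
    · -- continuity
      refine continuous_def.mpr ?_
      intro 𝒰 h𝒰
      apply h.1.2
      intro D x hDdir hDconv hx
      obtain ⟨B, ⟨b, hb⟩, hB𝒰, hBsub⟩ := (h𝒰 _).mp hx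
      have hbx : WayBelow b x := by
        apply hBsub
        rw [hb]; exact sOrd_refl b
      obtain ⟨c, hbc, hcx⟩ := interpolation h hbx
      obtain ⟨d, hd, hcd⟩ := hcx D hDdir hDconv
      refine ⟨d, hd, (h𝒰 _).mpr ⟨B, ⟨b, hb⟩, hB𝒰, ?_⟩⟩
      rw [hb]
      intro z hz
      exact wayBelow_of_sOrd_right (wayBelow_of_sOrd_left hz hbc) hcd
    · -- adjunction
      intro x A s hs
      constructor
      · intro hsub
        obtain ⟨D, hDsub, hDdir, hDconv⟩ := h.2 x
        rw [sOrd_iff_forall]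
        intro U hU hxU
        obtain ⟨d, hd, hdU⟩ := hDconv U hU hxU
        exact sOrd_iff_forall.mp (hs.1 d (hsub (hDsub hd))) U hU hdU
      · intro hxs
        obtain ⟨s', hs', hconv'⟩ := A.2.2.2
        have : s' = s := sOrd_antisymm (hs'.2 s hs.1) (hs.2 s' hs'.1)
        rw [this] at hconv'
        intro a ha
        obtain ⟨d, hd, had⟩ := ha A.1 A.2.1 (convTo_of_sOrd hconv' hxs)
        exact A.2.2.1 d hd a had
  · -- converse
    rintro ⟨f, hf, hadj⟩
    -- `f x ⊆ ↓x`
    have hfsub : ∀ x : X, (f x).1 ⊆ dnSet x := fun x =>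
      (hadj x ⟨dnSet x, principal_isTopIdeal x⟩ x (sup_dnSet x)).mpr (sOrd_refl x)
    -- sup of `f x` is `x`, and `f x` converges to `x`
    have hfconv : ∀ x : X, ConvTo (f x).1 x := by
      intro x
      obtain ⟨s, hs, hconv⟩ := (f x).2.2.2
      have hxs : SOrd x s := (hadj x (f x) s hs).mp subset_rfl
      have hsx : SOrd s x := hs.2 x fun d hd => hfsub x hd
      rwa [sOrd_antisymm hsx hxs] at hconv
    -- `{A | a ∈ A}` is Ω-open
    have hmemOpen : ∀ a : X, IsOpen {A : TopIdeal X | a ∈ A.1} := by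
      intro a A
      constructor
      · intro haA
        exact ⟨⟨dnSet a, principal_isTopIdeal a⟩, ⟨a, rfl⟩, sOrd_refl a,
          fun z hz => A.2.2.1 a haA z hz⟩
      · rintro ⟨B, ⟨b, hb⟩, haB, hBA⟩
        exact hBA haB
    -- X is a directed space
    have hdir : IsDirectedSpace X := by
      refine ⟨inferInstance, ?_⟩
      intro U hU
      have hOpen : IsOpen {A : TopIdeal X | (A.1 ∩ U).Nonempty} := by
        intro A
        constructor
        · rintro ⟨a, haA, haU⟩
          exact ⟨⟨dnSet a, principal_isTopIdeal a⟩, ⟨a, rfl⟩, ⟨a, sOrd_refl a, haU⟩,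
            fun z hz => A.2.2.1 a haA z hz⟩
        · rintro ⟨B, ⟨b, hb⟩, ⟨c, hcB, hcU⟩, hBA⟩
          exact ⟨c, hBA hcB, hcU⟩
      have : U = f ⁻¹' {A : TopIdeal X | (A.1 ∩ U).Nonempty} := by
        ext x
        constructor
        · intro hxU
          exact hU (f x).1 x (f x).2.1 (hfconv x) hxU
        · rintro ⟨a, haf, haU⟩
          exact dirOpen_upper hU haU (hfsub x haf)
      rw [this]
      exact hf.isOpen_preimage _ hOpen
    refine ⟨hdir, ?_⟩
    intro x
    refine ⟨(f x).1, ?_, (f x).2.1, hfconv x⟩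
    intro a ha
    intro D hDdir hDconv
    have hx𝒰 : x ∈ f ⁻¹' {A : TopIdeal X | a ∈ A.1} := ha
    obtain ⟨d, hd, hdmem⟩ := hDconv _ (hf.isOpen_preimage _ (hmemOpen a)) hx𝒰
    exact ⟨d, hd, hfsub d hdmem⟩
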